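/- Let a, b > 0 and consider two parallel links with latencies ℓ₁(x) = x, ℓ₂(x) = a·x + b. The Price of Anarchy, maximized over all input rates r > 0, equals 1 + 1/(4a + 3); in particular it is at most 4/3. -/
import Mathlib


/-- The Price of Anarchy at rate r on two links ℓ₁(x) = x, ℓ₂(x) = a·x + b. -/
noncomputable def poa (a b r : ℝ) : ℝ :=
  if r < b / 2 then 1
  else if r < b then (a + 1) * r ^ 2 / ((a + 1) * r ^ 2 - (r - b / 2) ^ 2)
  else (a * r + b) * r / ((a + 1) * (r ^ 2 - (r - b / 2) ^ 2 / (a + 1)))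

/-- For two links ℓ₁(x) = x, ℓ₂(x) = a·x + b with a, b > 0, the Price of Anarchy,
maximized over all input rates r > 0, equals 1 + 1/(4a + 3), which is at most 4/3. -/
theorem stmt3 (a b : ℝ) (ha : 0 < a) (hb : 0 < b) :
    IsGreatest {x : ℝ | ∃ r : ℝ, 0 < r ∧ x = poa a b r} (1 + 1 / (4 * a + 3)) ∧
    1 + 1 / (4 * a + 3) ≤ 4 / 3 := by
  have ha1 : (0:ℝ) < a + 1 := by linarith
  have h43 : (0:ℝ) < 4 * a + 3 := by linarith
  have hrhs : 1 + 1 / (4 * a + 3) = (4 * a + 4) / (4 * a + 3) := by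
    field_simp
    ring
  constructor
  · constructor
    · refine ⟨b, hb, ?_⟩
      rw [poa, if_neg (by linarith), if_neg (lt_irrefl b)]
      have hD : (a + 1) * (b ^ 2 - (b - b / 2) ^ 2 / (a + 1)) = (4 * a + 3) * b ^ 2 / 4 := by
        field_simp
        ring
      rw [hD, hrhs]
      rw [div_eq_div_iff (ne_of_gt h43) (by positivity)]
      ring
    · rintro x ⟨r, hr, rfl⟩
      rw [poa]
      split_ifs with h1 h2
      · have : 0 < 1 / (4 * a + 3) := by positivity
        linarith
      · push_neg at h1
        rw [hrhs]
        have hden : 0 < (a + 1) * r ^ 2 - (r - b / 2) ^ 2 := by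
          nlinarith [mul_pos ha (mul_pos hr hr), mul_pos hb hr]
        rw [div_le_div_iff₀ hden h43]
        nlinarith [mul_nonneg (mul_nonneg (by linarith : (0:ℝ) ≤ b - r)
          (by linarith : (0:ℝ) ≤ 3 * r - b)) (by linarith : (0:ℝ) ≤ a + 1)]
      · push_neg at h1 h2
        have hD : (a + 1) * (r ^ 2 - (r - b / 2) ^ 2 / (a + 1))
            = a * r ^ 2 + b * r - b ^ 2 / 4 := by
          field_simp
          ring
        rw [hD, hrhs]
        have hden : 0 < a * r ^ 2 + b * r - b ^ 2 / 4 := by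
          nlinarith [mul_pos ha (mul_pos hr hr), mul_nonneg hb.le (by linarith : (0:ℝ) ≤ r - b)]
        rw [div_le_div_iff₀ hden h43]
        nlinarith [mul_nonneg (mul_nonneg ha.le (by linarith : (0:ℝ) ≤ r - b))
          (by linarith : (0:ℝ) ≤ r + b),
          mul_nonneg hb.le (by linarith : (0:ℝ) ≤ r - b)]
  · have : 1 / (4 * a + 3) ≤ 1 / 3 := by
      rw [div_le_div_iff₀ h43 (by norm_num)]
      linarith
    linarith
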